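/- Let a finite index set I partition a set E of positive measure into pieces E_i of positive measures m_i with ∑_i m_i = Meas(E). Let η_i > 0 and define η_E by 1/η_E = ∑_i (1/η_i) · (m_i / Meas(E)). Let f be an L² function on E, and define c_i = (η_E/η_i) · (1/Meas(E)) · ∫_E f for each i. Then η_E · ‖f‖²_{L²(E)} - ∑_i η_i · c_i² · m_i ≥ 0. -/

import Mathlib

open MeasureTheory

theorem condition_two_general {I : Type*} [Fintype I] [Nonempty I]
    (E : Set (EuclideanSpace ℝ (Fin 3))) (hE : MeasurableSet E)
    (hEpos : 0 < (volume E).toReal)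
    (m : I → ℝ) (hm : ∀ i, 0 < m i) (hsum : ∑ i, m i = (volume E).toReal)
    (η : I → ℝ) (hη : ∀ i, 0 < η i)
    (ηE : ℝ) (hηE : 0 < ηE)
    (hharm : 1 / ηE = ∑ i, (1 / η i) * (m i / (volume E).toReal))
    (f : EuclideanSpace ℝ (Fin 3) → ℝ)
    (hf : MemLp f 2 (volume.restrict E))
    (c : I → ℝ)
    (hc : ∀ i, c i = (ηE / η i) * ((1 / (volume E).toReal) * ∫ x in E, f x)) :
    0 ≤ ηE * (∫ x in E, (f x) ^ 2) - ∑ i, η i * (c i) ^ 2 * m i := by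
  set M : ℝ := (volume E).toReal with hM
  have hMne : M ≠ 0 := ne_of_gt hEpos
  have hfin : volume E ≠ ⊤ := by
    intro h
    rw [hM, h] at hEpos
    simp at hEpos
  haveI : IsFiniteMeasure (volume.restrict E) :=
    ⟨by simpa [Measure.restrict_apply_univ] using hfin.lt_top⟩
  have hμuniv : (volume.restrict E) Set.univ = volume E := by
    simp [Measure.restrict_apply_univ]
  set A : ℝ := (1 / M) * ∫ x in E, f x with hA
  -- Cauchy-Schwarz: ∫ f² ≥ (∫ f)² / M
  have hf2 : Integrable (fun x => f x ^ 2) (volume.restrict E) := hf.integrable_sq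
  have hf1 : Integrable f (volume.restrict E) := hf.integrable (by norm_num)
  have hexpand : ∫ x in E, (f x - A) ^ 2 =
      (∫ x in E, f x ^ 2) - 2 * A * (∫ x in E, f x) + A ^ 2 * M := by
    have h1 : ∀ x, (f x - A) ^ 2 = f x ^ 2 - 2 * A * f x + A ^ 2 := by
      intro x; ring
    simp_rw [h1]
    rw [integral_add (by exact (hf2.sub ((hf1.const_mul _)))) (integrable_const _),
        integral_sub hf2 (hf1.const_mul _), integral_const, integral_const_mul, measureReal_def, hμuniv]
    rw [smul_eq_mul, ← hM]
    ring
  have hCS : (∫ x in E, f x) ^ 2 / M ≤ ∫ x in E, f x ^ 2 := by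
    have h0 : 0 ≤ ∫ x in E, (f x - A) ^ 2 :=
      integral_nonneg fun x => sq_nonneg _
    rw [hexpand] at h0
    have : 2 * A * (∫ x in E, f x) - A ^ 2 * M ≤ ∫ x in E, f x ^ 2 := by linarith
    calc (∫ x in E, f x) ^ 2 / M
        = 2 * A * (∫ x in E, f x) - A ^ 2 * M := by
          rw [hA]; field_simp; ring
      _ ≤ ∫ x in E, f x ^ 2 := this
  -- compute the sum
  have hsumc : ∑ i, η i * (c i) ^ 2 * m i = ηE * ((∫ x in E, f x) ^ 2 / M) := by
    have h1 : ∀ i, η i * (c i) ^ 2 * m i = ηE ^ 2 * A ^ 2 * ((1 / η i) * m i) := by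
      intro i
      have hηi : η i ≠ 0 := ne_of_gt (hη i)
      rw [hc i]
      field_simp
    simp_rw [h1, ← Finset.mul_sum]
    have h2 : ∑ i, (1 / η i) * m i = M / ηE := by
      have := hharm
      rw [hM]
      have h3 : (1 / ηE) * M = (∑ i, (1 / η i) * (m i / M)) * M := by rw [← hharm]
      rw [Finset.sum_mul] at h3
      have h4 : ∀ i, (1 / η i) * (m i / M) * M = (1 / η i) * m i := by
        intro i
        have hηi : η i ≠ 0 := ne_of_gt (hη i)
        field_simp
      simp_rw [h4] at h3
      rw [← h3]; field_simp; rfl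
    rw [h2, hA]
    field_simp
  rw [hsumc]
  have := mul_le_mul_of_nonneg_left hCS (le_of_lt hηE)
  linarith
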